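/- For fixed ratio c = M/(KN) > 0, with M = cKN and K → ∞, the normalized DoF d*(M,N,K)/(KN) converges to min{c, 1}, where d* = min{3M/2, max{M + 5MN/(9M+N), √(3K)·N/2}, M + K·N²/(3M), K·N}. -/

import Mathlib

noncomputable def dstar (M N : ℝ) (K : ℕ) : ℝ :=
  min (min (3 * M / 2)
      (max (M + 5 * M * N / (9 * M + N)) (Real.sqrt (3 * K) * N / 2)))
    (min (M + K * N ^ 2 / (3 * M)) (K * N))

lemma sqrt_tendsto_atTop : Filter.Tendsto Real.sqrt Filter.atTop Filter.atTop := by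
  have h := tendsto_rpow_atTop (by norm_num : (0:ℝ) < 1/2)
  refine h.congr' ?_
  filter_upwards [Filter.eventually_ge_atTop (0:ℝ)] with x hx
  rw [Real.sqrt_eq_rpow]

theorem stmt_19 (c N : ℝ) (hc : 0 < c) (hN : 0 < N) :
    Filter.Tendsto (fun K : ℕ => dstar (c * (K * N)) N K / (K * N))
      Filter.atTop (nhds (min c 1)) := by
  -- simplified function
  set g : ℕ → ℝ := fun K =>
    min (min (3 * c / 2)
        (max (c + 5 * c * N / (9 * c * ((K : ℝ) * N) + N))
          (Real.sqrt 3 / (2 * Real.sqrt K))))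
      (min (c + 1 / (3 * c * K)) 1) with hg
  have hKnat : Filter.Tendsto (fun K : ℕ => (K : ℝ)) Filter.atTop Filter.atTop :=
    tendsto_natCast_atTop_atTop
  -- limit of g
  have hgt : Filter.Tendsto g Filter.atTop (nhds (min c 1)) := by
    have h2 : Filter.Tendsto (fun K : ℕ => c + 5 * c * N / (9 * c * ((K : ℝ) * N) + N))
        Filter.atTop (nhds c) := by
      have hden : Filter.Tendsto (fun K : ℕ => 9 * c * ((K : ℝ) * N) + N)
          Filter.atTop Filter.atTop := by
        have := (hKnat.atTop_mul_const hN).const_mul_atTop (by positivity : (0:ℝ) < 9 * c)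
        exact Filter.tendsto_atTop_add_const_right _ N this
      have : Filter.Tendsto (fun K : ℕ => 5 * c * N / (9 * c * ((K : ℝ) * N) + N))
          Filter.atTop (nhds 0) := by
        simpa [div_eq_mul_inv] using hden.inv_tendsto_atTop.const_mul (5 * c * N)
      simpa using (tendsto_const_nhds.add this : Filter.Tendsto _ _ (nhds (c + 0)))
    have h3 : Filter.Tendsto (fun K : ℕ => Real.sqrt 3 / (2 * Real.sqrt K))
        Filter.atTop (nhds 0) := by
      have hden : Filter.Tendsto (fun K : ℕ => 2 * Real.sqrt K) Filter.atTop Filter.atTop :=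
        (sqrt_tendsto_atTop.comp hKnat).const_mul_atTop (by norm_num)
      simpa [div_eq_mul_inv] using hden.inv_tendsto_atTop.const_mul (Real.sqrt 3)
    have h4 : Filter.Tendsto (fun K : ℕ => c + 1 / (3 * c * (K : ℝ)))
        Filter.atTop (nhds c) := by
      have hden : Filter.Tendsto (fun K : ℕ => 3 * c * (K : ℝ)) Filter.atTop Filter.atTop :=
        hKnat.const_mul_atTop (by positivity)
      have : Filter.Tendsto (fun K : ℕ => 1 / (3 * c * (K : ℝ))) Filter.atTop (nhds 0) := by
        have h0 := hden.inv_tendsto_atTop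
        refine h0.congr fun K => ?_
        simp [one_div]
      simpa using (tendsto_const_nhds.add this : Filter.Tendsto _ _ (nhds (c + 0)))
    have := ((tendsto_const_nhds (x := 3 * c / 2)).min (h2.max h3)).min
      (h4.min (tendsto_const_nhds (x := (1:ℝ))))
    have hval : min (min (3 * c / 2) (max c 0)) (min c 1) = min c 1 := by
      rw [max_eq_left hc.le, min_eq_right (by linarith : c ≤ 3 * c / 2)]
      rw [← min_assoc, min_self]
    rw [← hval]
    exact this
  -- eventual equality
  refine hgt.congr' ?_
  filter_upwards [Filter.eventually_ge_atTop 1] with K hK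
  have hKpos : (0:ℝ) < (K : ℝ) := by exact_mod_cast Nat.lt_of_lt_of_le Nat.zero_lt_one hK
  have hKN : (0:ℝ) < (K : ℝ) * N := mul_pos hKpos hN
  have hM : (0:ℝ) < c * ((K : ℝ) * N) := mul_pos hc hKN
  have hsK : (0:ℝ) < Real.sqrt K := Real.sqrt_pos.mpr hKpos
  simp only [hg, dstar]
  rw [← min_div_div_right hKN.le, ← min_div_div_right hKN.le, ← min_div_div_right hKN.le,
    ← max_div_div_right hKN.le]
  congr 1
  · congr 1
    · field_simp
    · congr 1
      · have hden : (0:ℝ) < 9 * (c * ((K:ℝ) * N)) + N := by positivity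
        field_simp
      · have h3K : Real.sqrt (3 * (K:ℕ)) = Real.sqrt 3 * Real.sqrt K := by
          exact Real.sqrt_mul (by norm_num) _
        rw [h3K]
        have hk : Real.sqrt K * Real.sqrt K = (K:ℝ) := Real.mul_self_sqrt hKpos.le
        rw [div_eq_div_iff (by positivity) (by positivity)]
        linear_combination (-(Real.sqrt 3) * N) * hk
  · congr 1
    · field_simp
    · rw [div_self hKN.ne']
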